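/- Set e = −2 + p'/p + q'/q + (pq−2)/(pq−1) and ε = (−1 + 1/p + 1/q + 1/(pq−1))/e. Then ε²·e + e + 5 − 12·( s(p', p) + s(q', q) + s(pq−2, pq−1) ) = −4δ(δ−3). (This computes the invariant K² + s of the negative definite Seifert manifold Σ(−2,(p,p'),(q,q'),(pq−1,pq−2)) = −S³₁(T_{p,q}).) -/

import Mathlib

set_option maxHeartbeats 1000000
open Finset

/-- The sawtooth function `((x))`: it is `0` for integers `x`, and `x - ⌊x⌋ - 1/2` otherwise. -/
noncomputable def saw (x : ℝ) : ℝ := if Int.fract x = 0 then 0 else Int.fract x - 1/2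

/-- The generalized Dedekind sum `s(a, b; x, y) = Σ_{i=0}^{b-1} (((i+y)/b))·((a(i+y)/b + x))`. -/
noncomputable def dsum (a b : ℤ) (x y : ℝ) : ℝ :=
  ∑ i ∈ Finset.range b.toNat,
    saw (((i : ℝ) + y) / (b : ℝ)) * saw ((a : ℝ) * ((i : ℝ) + y) / (b : ℝ) + x)

lemma fract_nat_div (m b : ℕ) (hb : 0 < b) :
    Int.fract ((m : ℝ) / b) = ((m % b : ℕ) : ℝ) / b := by
  have hb' : (b:ℝ) ≠ 0 := Nat.cast_ne_zero.2 hb.ne'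
  have h2 : (b:ℝ) * ((m / b : ℕ) : ℝ) + ((m % b : ℕ) : ℝ) = (m : ℝ) := by
    exact_mod_cast congrArg (Nat.cast : ℕ → ℝ) (Nat.div_add_mod m b)
  have h1 : ((m : ℝ) / b) = ((m / b : ℕ) : ℝ) + ((m % b : ℕ) : ℝ) / b := by
    field_simp
    linarith
  rw [h1, Int.fract_natCast_add, Int.fract_eq_self.2]
  constructor
  · positivity
  · rw [div_lt_one (by positivity)]
    exact_mod_cast Nat.mod_lt m hb

lemma saw_nat_div (m b : ℕ) (hb : 0 < b) :
    saw ((m : ℝ) / b) = saw (((m % b : ℕ) : ℝ) / b) := by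
  unfold saw
  rw [fract_nat_div m b hb, fract_nat_div (m % b) b hb, Nat.mod_mod_of_dvd m dvd_rfl]

lemma saw_nat_div_eq (m b : ℕ) (hb : 0 < b) (hm : m < b) :
    saw ((m : ℝ) / b) = if m = 0 then 0 else (m : ℝ) / b - 1/2 := by
  have hb' : (b:ℝ) ≠ 0 := Nat.cast_ne_zero.2 hb.ne'
  unfold saw
  rw [fract_nat_div m b hb, Nat.mod_eq_of_lt hm]
  by_cases h : m = 0
  · simp [h]
  · rw [if_neg h, if_neg]
    have h0 : (0:ℝ) < (m:ℝ) / b := by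
      have : 0 < m := Nat.pos_of_ne_zero h
      positivity
    exact h0.ne'

lemma sum_reindex (c b : ℕ) (h : Nat.Coprime c b) (f : ℕ → ℝ) :
    ∑ k ∈ range b, f (c * k % b) = ∑ k ∈ range b, f k := by
  rcases Nat.eq_zero_or_pos b with rfl | hb
  · simp
  have hmem : ∀ k ∈ range b, c * k % b ∈ range b :=
    fun k _ => mem_range.2 (Nat.mod_lt _ hb)
  have hinj : ∀ k₁ k₂ : ℕ, k₁ ∈ range b → k₂ ∈ range b → c * k₁ % b = c * k₂ % b → k₁ = k₂ := by
    intro k₁ k₂ h₁ h₂ he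
    have : k₁ ≡ k₂ [MOD b] := Nat.ModEq.cancel_left_of_coprime h.symm he
    exact this.eq_of_lt_of_lt (mem_range.1 h₁) (mem_range.1 h₂)
  refine Finset.sum_bij (fun k _ => c * k % b) hmem (fun a₁ ha₁ a₂ ha₂ => hinj a₁ a₂ ha₁ ha₂) ?_ ?_
  · intro y hy
    obtain ⟨a, ha, he⟩ := Finset.surj_on_of_inj_on_of_card_le (fun k _ => c * k % b)
      hmem hinj le_rfl y hy
    exact ⟨a, ha, he.symm⟩
  · intro k _
    rfl

lemma gauss1 (n : ℕ) : ∑ k ∈ range n, (k:ℝ) = n * (n - 1) / 2 := by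
  induction n with
  | zero => simp
  | succ m ih => rw [Finset.sum_range_succ, ih]; push_cast; ring

lemma gauss2 (n : ℕ) : ∑ k ∈ range n, (k:ℝ)^2 = n * (n - 1) * (2*n - 1) / 6 := by
  induction n with
  | zero => simp
  | succ m ih => rw [Finset.sum_range_succ, ih]; push_cast; ring

lemma dsum_mod_form (a b : ℕ) (hb : 0 < b) :
    dsum (a:ℤ) (b:ℤ) 0 0
      = ∑ k ∈ range b, saw ((k:ℝ)/b) * saw (((a * k % b : ℕ):ℝ)/b) := by
  unfold dsum
  rw [Int.toNat_natCast]
  refine Finset.sum_congr rfl fun k _ => ?_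
  have h1 : ((a:ℤ):ℝ) * ((k:ℝ) + 0) / ((b:ℤ):ℝ) + 0 = ((a * k : ℕ):ℝ) / b := by
    push_cast; ring
  have h2 : (((k:ℕ):ℝ) + 0) / ((b:ℤ):ℝ) = ((k:ℕ):ℝ) / b := by push_cast; ring
  rw [h1, h2, saw_nat_div (a*k) b hb]

lemma dsum_explicit (a b : ℕ) (hb : 0 < b) (h : Nat.Coprime a b) :
    dsum (a:ℤ) (b:ℤ) 0 0
      = (∑ k ∈ range b, (k:ℝ) * ((a * k % b : ℕ):ℝ)) / b^2 - ((b:ℝ) - 1)/4 := by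
  have hb' : (b:ℝ) ≠ 0 := Nat.cast_ne_zero.2 hb.ne'
  rw [dsum_mod_form a b hb]
  have step1 : ∀ k ∈ range b,
      saw ((k:ℝ)/b) * saw (((a * k % b : ℕ):ℝ)/b)
        = ((k:ℝ)/b - 1/2) * (((a * k % b : ℕ):ℝ)/b - 1/2) - (if k = 0 then (1:ℝ)/4 else 0) := by
    intro k hk
    have hkb := mem_range.1 hk
    rw [saw_nat_div_eq k b hb hkb, saw_nat_div_eq (a*k%b) b hb (Nat.mod_lt _ hb)]
    by_cases hk0 : k = 0
    · subst hk0; simp; norm_num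
    · have hmod : a * k % b ≠ 0 := by
        intro hmod
        have hdvd : b ∣ a * k := Nat.dvd_of_mod_eq_zero hmod
        have : b ∣ k := (Nat.Coprime.dvd_of_dvd_mul_left (by exact h.symm) hdvd)
        exact absurd (Nat.le_of_dvd (Nat.pos_of_ne_zero hk0) this) (not_le.2 hkb)
      rw [if_neg hk0, if_neg hmod, if_neg hk0]
      ring
  rw [Finset.sum_congr rfl step1, Finset.sum_sub_distrib]
  have hzero : ∑ k ∈ range b, (if k = 0 then (1:ℝ)/4 else 0) = 1/4 := by
    rw [Finset.sum_ite_eq' (range b) 0 (fun _ => (1:ℝ)/4), if_pos (mem_range.2 hb)]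
  rw [hzero]
  have expand : ∀ k ∈ range b,
      ((k:ℝ)/b - 1/2) * (((a * k % b : ℕ):ℝ)/b - 1/2)
        = ((k:ℝ) * ((a * k % b : ℕ):ℝ))/b^2
          - (k:ℝ)/(2*b) - ((a * k % b : ℕ):ℝ)/(2*b) + 1/4 := by
    intro k _
    field_simp
    ring
  rw [Finset.sum_congr rfl expand]
  rw [Finset.sum_add_distrib, Finset.sum_sub_distrib, Finset.sum_sub_distrib,
      ← Finset.sum_div, ← Finset.sum_div, ← Finset.sum_div,
      Finset.sum_const, card_range, nsmul_eq_mul]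
  have hr : ∑ k ∈ range b, ((a * k % b : ℕ):ℝ) = (b:ℝ) * ((b:ℝ) - 1) / 2 := by
    rw [sum_reindex a b h (fun m => (m:ℝ)), gauss1]
  rw [hr, gauss1]
  field_simp
  ring

lemma coprime_of_mulmod (a c b : ℕ) (h : a * c ≡ 1 [MOD b]) : Nat.Coprime b c := by
  have h1 : Nat.gcd b (a*c) = Nat.gcd b 1 := by
    rw [Nat.gcd_rec, Nat.gcd_rec b 1, h]
  have h2 : Nat.Coprime b (a*c) := by rw [Nat.Coprime, h1, Nat.gcd_one_right]
  exact h2.coprime_dvd_right (dvd_mul_left c a)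

lemma dsum_inv (a c b : ℕ) (hb : 0 < b) (h : a * c ≡ 1 [MOD b]) :
    dsum (c:ℤ) (b:ℤ) 0 0 = dsum (a:ℤ) (b:ℤ) 0 0 := by
  have hcb : Nat.Coprime c b := (coprime_of_mulmod a c b h).symm
  rw [dsum_mod_form c b hb, dsum_mod_form a b hb,
    ← sum_reindex c b hcb (fun m => saw ((m:ℝ)/b) * saw (((a * m % b : ℕ):ℝ)/b))]
  refine Finset.sum_congr rfl fun k hk => ?_
  have hkb := mem_range.1 hk
  have hmod : a * (c * k % b) % b = k := by
    have h1 : a * (c * k % b) ≡ a * (c * k) [MOD b] :=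
      Nat.ModEq.mul_left a (Nat.mod_modEq (c*k) b)
    have h2 : a * (c * k) ≡ k [MOD b] := by
      have := h.mul_right k
      simpa [mul_assoc] using this
    have h3 : a * (c * k % b) % b = k % b := h1.trans h2
    rwa [Nat.mod_eq_of_lt hkb] at h3
  simp only [hmod]
  rw [mul_comm]

lemma dsum_pred (b : ℕ) (hb : 2 ≤ b) :
    dsum ((b - 1 : ℕ):ℤ) (b:ℤ) 0 0 = -(((b:ℝ)-1)*((b:ℝ)-2))/(12*b) := by
  have hb0 : 0 < b := by omega
  have hb' : (b:ℝ) ≠ 0 := Nat.cast_ne_zero.2 hb0.ne'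
  have hcop : Nat.Coprime (b-1) b := by
    have hsq : (b-1) * (b-1) ≡ 1 [MOD b] := by
      have h1 : (b-1) * (b-1) = b * (b-2) + 1 := by
        zify [show 1 ≤ b by omega, show 2 ≤ b from hb]
        ring
      show ((b-1) * (b-1)) % b = 1 % b
      rw [h1, Nat.mul_add_mod]
    exact (coprime_of_mulmod (b-1) (b-1) b hsq).symm
  rw [dsum_explicit (b-1) b hb0 hcop]
  have key : ∀ k ∈ range b, (k:ℝ) * (((b-1) * k % b : ℕ):ℝ) = (b:ℝ)*(k:ℝ) - (k:ℝ)^2 := by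
    intro k hk
    have hkb := mem_range.1 hk
    by_cases hk0 : k = 0
    · subst hk0; simp
    · obtain ⟨j, rfl⟩ : ∃ j, k = j + 1 := ⟨k-1, by omega⟩
      have h1 : (b-1) * (j+1) = b * j + (b - (j+1)) := by
        zify [show 1 ≤ b by omega, show j+1 ≤ b by omega]
        ring
      rw [h1, Nat.mul_add_mod, Nat.mod_eq_of_lt (by omega)]
      have : ((b - (j+1) : ℕ):ℝ) = (b:ℝ) - ((j+1 : ℕ):ℝ) := by
        push_cast [Nat.cast_sub (show j+1 ≤ b by omega)]
        ring
      rw [this]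
      push_cast
      ring
  rw [Finset.sum_congr rfl key, Finset.sum_sub_distrib, ← Finset.mul_sum, gauss1, gauss2]
  field_simp
  ring

lemma gauss_ico (c b : ℕ) (h : c ≤ b) :
    2 * (∑ x ∈ Ico c b, x) + c * (c-1) = b * (b-1) := by
  have hsplit : (∑ x ∈ Ico 0 c, x) + (∑ x ∈ Ico c b, x) = ∑ x ∈ Ico 0 b, x :=
    Finset.sum_Ico_consecutive _ (Nat.zero_le c) h
  have g1 := Finset.sum_range_id_mul_two c
  have g2 := Finset.sum_range_id_mul_two b
  rw [← Finset.range_eq_Ico] at hsplit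
  calc 2 * (∑ x ∈ Ico c b, x) + c * (c-1)
      = 2 * (∑ x ∈ Ico c b, x) + (∑ i ∈ range c, i) * 2 := by rw [g1]
    _ = 2 * ((∑ i ∈ range c, i) + ∑ x ∈ Ico c b, x) := by ring
    _ = 2 * (∑ i ∈ range b, i) := by rw [hsplit, Finset.range_eq_Ico]
    _ = b * (b-1) := by rw [← g2]; ring

lemma lattice (a b : ℕ) (ha : 0 < a) (hb : 0 < b) (hcop : Nat.Coprime a b) :
    2 * (∑ x ∈ Ico 1 b, x * (a*x/b)) + ∑ y ∈ Ico 1 a, (b*y/a) * (b*y/a + 1)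
      = (a-1) * (b*(b-1)) := by
  have stepA : ∀ x ∈ Ico 1 b,
      x * (a*x/b) = ∑ y ∈ Ico 1 a, if b*y < a*x then x else 0 := by
    intro x hx
    obtain ⟨hx1, hxb⟩ := mem_Ico.1 hx
    have hfil : (Ico 1 a).filter (fun y => b*y < a*x) = Ico 1 (a*x/b + 1) := by
      ext y
      simp only [mem_filter, mem_Ico]
      constructor
      · rintro ⟨⟨h1, _⟩, h3⟩
        refine ⟨h1, Nat.lt_succ_of_le ?_⟩
        rw [Nat.le_div_iff_mul_le hb, mul_comm y b]
        exact h3.le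
      · rintro ⟨h1, h2⟩
        have hle : y * b ≤ a * x := (Nat.le_div_iff_mul_le hb).1 (Nat.lt_succ_iff.1 h2)
        have hne : y * b ≠ a * x := by
          intro he
          have hdvd : b ∣ a * x := ⟨y, by rw [← he, mul_comm]⟩
          have : b ∣ x := (Nat.Coprime.dvd_of_dvd_mul_left hcop.symm) hdvd
          have := Nat.le_of_dvd (show 0 < x from hx1) this
          omega
        have hya : y * b < a * b := by
          calc y * b ≤ a * x := hle
            _ ≤ a * (b-1) := Nat.mul_le_mul_left a (by omega)
            _ < a * b := (Nat.mul_lt_mul_left ha).2 (by omega)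
        have : y < a := by
          by_contra hcon
          push_neg at hcon
          exact absurd (Nat.mul_le_mul_right b hcon) (by omega)
        exact ⟨⟨h1, this⟩, by rw [mul_comm b y]; omega⟩
    rw [← Finset.sum_filter, hfil, Finset.sum_const, Nat.card_Ico, smul_eq_mul,
      Nat.add_sub_cancel, mul_comm]
  have stepC : ∀ y ∈ Ico 1 a,
      (∑ x ∈ Ico 1 b, if b*y < a*x then x else 0) = ∑ x ∈ Ico (b*y/a + 1) b, x := by
    intro y hy
    rw [← Finset.sum_filter]
    congr 1
    ext x
    simp only [mem_filter, mem_Ico]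
    constructor
    · rintro ⟨⟨_, h2⟩, h3⟩
      refine ⟨?_, h2⟩
      have : b*y/a < x := by
        rw [Nat.div_lt_iff_lt_mul ha, mul_comm x a]
        exact h3
      omega
    · rintro ⟨h1, h2⟩
      have h3 : b*y/a < x := by omega
      rw [Nat.div_lt_iff_lt_mul ha, mul_comm x a] at h3
      exact ⟨⟨le_trans (Nat.le_add_left 1 _) h1, h2⟩, h3⟩
  have hA : (∑ x ∈ Ico 1 b, x * (a*x/b))
      = ∑ y ∈ Ico 1 a, ∑ x ∈ Ico (b*y/a + 1) b, x := by
    rw [Finset.sum_congr rfl stepA, Finset.sum_comm, Finset.sum_congr rfl stepC]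
  have hcb : ∀ y ∈ Ico 1 a, b*y/a + 1 ≤ b := by
    intro y hy
    obtain ⟨h1, h2⟩ := mem_Ico.1 hy
    have : b*y/a < b := by
      rw [Nat.div_lt_iff_lt_mul ha]
      calc b*y ≤ b*(a-1) := Nat.mul_le_mul_left b (by omega)
        _ < b*a := (Nat.mul_lt_mul_left hb).2 (by omega)
    omega
  rw [hA, Finset.mul_sum, ← Finset.sum_add_distrib]
  have : ∀ y ∈ Ico 1 a,
      2 * (∑ x ∈ Ico (b*y/a + 1) b, x) + (b*y/a) * (b*y/a + 1) = b * (b-1) := by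
    intro y hy
    have := gauss_ico (b*y/a + 1) b (hcb y hy)
    simpa [Nat.add_sub_cancel, mul_comm] using this
  rw [Finset.sum_congr rfl this, Finset.sum_const, Nat.card_Ico, smul_eq_mul]

lemma reciprocity (a b : ℕ) (ha : 0 < a) (hb : 0 < b) (h : Nat.Coprime a b) :
    dsum (a:ℤ) (b:ℤ) 0 0 + dsum (b:ℤ) (a:ℤ) 0 0
      = -1/4 + ((a:ℝ)/b + (b:ℝ)/a + 1/((a:ℝ)*b))/12 := by
  have ha' : (a:ℝ) ≠ 0 := Nat.cast_ne_zero.2 ha.ne'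
  have hb' : (b:ℝ) ≠ 0 := Nat.cast_ne_zero.2 hb.ne'
  have hdm : ∀ (m c : ℕ), (c:ℝ) * ((m/c : ℕ):ℝ) + ((m % c : ℕ):ℝ) = (m:ℝ) := by
    intro m c
    exact_mod_cast congrArg (Nat.cast : ℕ → ℝ) (Nat.div_add_mod m c)
  -- real version of the lattice identity, over `range`
  have latN := lattice a b ha hb h
  have latR : 2 * (∑ x ∈ range b, (x:ℝ) * ((a*x/b : ℕ):ℝ))
      + (∑ y ∈ range a, (((b*y/a : ℕ):ℝ)^2 + ((b*y/a : ℕ):ℝ)))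
      = ((a:ℝ)-1) * ((b:ℝ)*((b:ℝ)-1)) := by
    have e1 : ∑ x ∈ range b, (x:ℝ) * ((a*x/b : ℕ):ℝ)
        = ∑ x ∈ Ico 1 b, ((x * (a*x/b) : ℕ):ℝ) := by
      rw [Finset.range_eq_Ico, Finset.sum_eq_sum_Ico_succ_bot hb]
      simp [Nat.cast_mul]
    have e2 : ∑ y ∈ range a, (((b*y/a : ℕ):ℝ)^2 + ((b*y/a : ℕ):ℝ))
        = ∑ y ∈ Ico 1 a, (((b*y/a) * (b*y/a + 1) : ℕ):ℝ) := by
      rw [Finset.range_eq_Ico, Finset.sum_eq_sum_Ico_succ_bot ha]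
      simp only [Nat.mul_zero, Nat.zero_div, Nat.cast_zero]
      rw [show ((0:ℝ)^2 + 0) = 0 by ring, zero_add]
      refine Finset.sum_congr rfl fun y _ => ?_
      push_cast
      ring
    rw [e1, e2, ← Nat.cast_sum, ← Nat.cast_sum, ← Nat.cast_ofNat (n := 2),
      ← Nat.cast_mul, ← Nat.cast_add, latN]
    push_cast [Nat.cast_sub (show 1 ≤ a from ha), Nat.cast_sub (show 1 ≤ b from hb)]
    ring
  -- replace divs by mods
  have TbEq : (b:ℝ) * (∑ x ∈ range b, (x:ℝ) * ((a*x/b : ℕ):ℝ))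
      = (a:ℝ) * (∑ x ∈ range b, (x:ℝ)^2)
        - ∑ x ∈ range b, (x:ℝ) * ((a*x % b : ℕ):ℝ) := by
    rw [Finset.mul_sum, Finset.mul_sum, ← Finset.sum_sub_distrib]
    refine Finset.sum_congr rfl fun x _ => ?_
    have hx := hdm (a*x) b
    push_cast at hx
    linear_combination (x:ℝ) * hx
  have UEq : (a:ℝ)^2 * (∑ y ∈ range a, (((b*y/a : ℕ):ℝ)^2 + ((b*y/a : ℕ):ℝ)))
      = (b:ℝ)^2 * (∑ y ∈ range a, (y:ℝ)^2)
        - 2*(b:ℝ) * (∑ y ∈ range a, (y:ℝ) * ((b*y % a : ℕ):ℝ))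
        + (∑ y ∈ range a, ((b*y % a : ℕ):ℝ)^2)
        + (a:ℝ)*(b:ℝ) * (∑ y ∈ range a, (y:ℝ))
        - (a:ℝ) * (∑ y ∈ range a, ((b*y % a : ℕ):ℝ)) := by
    rw [Finset.mul_sum, Finset.mul_sum, Finset.mul_sum, Finset.mul_sum, Finset.mul_sum]
    rw [← Finset.sum_sub_distrib, ← Finset.sum_add_distrib, ← Finset.sum_add_distrib,
      ← Finset.sum_sub_distrib]
    refine Finset.sum_congr rfl fun y _ => ?_
    have hy := hdm (b*y) a
    push_cast at hy
    have hd : ((b*y/a : ℕ):ℝ) = ((b:ℝ)*(y:ℝ) - ((b*y % a : ℕ):ℝ))/a := by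
      field_simp
      linarith [hy]
    rw [hd]
    field_simp
    ring
  -- bijection facts
  have hra : ∑ y ∈ range a, ((b*y % a : ℕ):ℝ) = ∑ y ∈ range a, (y:ℝ) :=
    sum_reindex b a h.symm (fun m => (m:ℝ))
  have hra2 : ∑ y ∈ range a, ((b*y % a : ℕ):ℝ)^2 = ∑ y ∈ range a, (y:ℝ)^2 :=
    sum_reindex b a h.symm (fun m => (m:ℝ)^2)
  rw [hra, hra2, gauss1, gauss2] at UEq
  rw [gauss2] at TbEq
  -- eliminate the div-sums
  have key0 : 2*(a:ℝ)^2*((a:ℝ) * ((b:ℝ) * ((b:ℝ) - 1) * (2*(b:ℝ) - 1) / 6)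
        - ∑ x ∈ range b, (x:ℝ) * ((a*x % b : ℕ):ℝ))
      + (b:ℝ)*((b:ℝ)^2 * ((a:ℝ) * ((a:ℝ) - 1) * (2*(a:ℝ) - 1) / 6)
        - 2*(b:ℝ) * (∑ y ∈ range a, (y:ℝ) * ((b*y % a : ℕ):ℝ))
        + ((a:ℝ) * ((a:ℝ) - 1) * (2*(a:ℝ) - 1) / 6)
        + (a:ℝ)*(b:ℝ) * ((a:ℝ) * ((a:ℝ) - 1) / 2)
        - (a:ℝ) * ((a:ℝ) * ((a:ℝ) - 1) / 2))
      = (a:ℝ)^2*(b:ℝ)^2*((a:ℝ)-1)*((b:ℝ)-1) := by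
    linear_combination (-2*(a:ℝ)^2) * TbEq + (-(b:ℝ)) * UEq + ((a:ℝ)^2*(b:ℝ)) * latR
  -- final assembly
  rw [dsum_explicit a b hb h, dsum_explicit b a ha h.symm]
  have key1 : (∑ x ∈ range b, (x:ℝ) * ((a*x % b : ℕ):ℝ)) / (b:ℝ)^2
      + (∑ y ∈ range a, (y:ℝ) * ((b*y % a : ℕ):ℝ)) / (a:ℝ)^2
      = ((b:ℝ)-1)/4 + ((a:ℝ)-1)/4 - 1/4 + ((a:ℝ)/b + (b:ℝ)/a + 1/((a:ℝ)*b))/12 := by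
    field_simp
    linear_combination (-24) * key0
  linear_combination key1

/-- with `e = −2 + p'/p + q'/q + (pq−2)/(pq−1)` and
`ε = (−1 + 1/p + 1/q + 1/(pq−1))/e`, one has
`ε²e + e + 5 − 12(s(p',p) + s(q',q) + s(pq−2,pq−1)) = −4δ(δ−3)`;
this is `K² + s` for `Σ(−2,(p,p'),(q,q'),(pq−1,pq−2)) = −S³₁(T_{p,q})`. -/
theorem K_squared_plus_s (p q : ℕ) (hp : 2 ≤ p) (hpq : p < q) (hcop : Nat.Coprime p q)
    (δ : ℕ) (hδ : 2 * δ = (p - 1) * (q - 1))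
    (p' : ℕ) (hp'pos : 0 < p') (hp'lt : p' < p) (hp' : p' * q ≡ 1 [MOD p])
    (q' : ℕ) (hq'pos : 0 < q') (hq'lt : q' < q) (hq' : p * q' ≡ 1 [MOD q])
    (e ε : ℝ)
    (he : e = -2 + (p' : ℝ) / (p : ℝ) + (q' : ℝ) / (q : ℝ)
        + ((p : ℝ) * (q : ℝ) - 2) / ((p : ℝ) * (q : ℝ) - 1))
    (hε : ε = (-1 + 1 / (p : ℝ) + 1 / (q : ℝ) + 1 / ((p : ℝ) * (q : ℝ) - 1)) / e) :
    ε ^ 2 * e + e + 5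
        - 12 * (dsum (p' : ℤ) (p : ℤ) 0 0 + dsum (q' : ℤ) (q : ℤ) 0 0
          + dsum ((p : ℤ) * (q : ℤ) - 2) ((p : ℤ) * (q : ℤ) - 1) 0 0) =
      -4 * (δ : ℝ) * ((δ : ℝ) - 3) := by
  have hq : 3 ≤ q := by omega
  have hp0 : 0 < p := by omega
  have hq0 : 0 < q := by omega
  have hpq6 : 6 ≤ p * q := by calc 6 = 2*3 := rfl
                                  _ ≤ p*q := Nat.mul_le_mul hp hq
  -- key arithmetic identity  p'q + pq' = pq + 1
  have hkey : p' * q + p * q' = p * q + 1 := by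
    have h1 : p' * q + p * q' ≡ 1 + 0 [MOD p] :=
      Nat.ModEq.add hp' ((Nat.modEq_zero_iff_dvd).2 (dvd_mul_right p q'))
    have h2 : p' * q + p * q' ≡ 0 + 1 [MOD q] :=
      Nat.ModEq.add ((Nat.modEq_zero_iff_dvd).2 (dvd_mul_left q p')) hq'
    rw [show 1 + 0 = 1 from rfl] at h1
    rw [show 0 + 1 = 1 from rfl] at h2
    have h3 : p' * q + p * q' ≡ 1 [MOD p * q] :=
      (Nat.modEq_and_modEq_iff_modEq_mul hcop).1 ⟨h1, h2⟩
    have hge : q + p ≤ p' * q + p * q' := by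
      have g1 : q ≤ p' * q := Nat.le_mul_of_pos_left q hp'pos
      have g2 : p ≤ p * q' := Nat.le_mul_of_pos_right p hq'pos
      omega
    have hdvd : p * q ∣ (p' * q + p * q' - 1) :=
      (Nat.modEq_iff_dvd' (by omega)).1 h3.symm
    have hb1 : p' * q + q ≤ p * q := by
      have : (p' + 1) * q ≤ p * q := Nat.mul_le_mul_right q (by omega)
      nlinarith
    have hb2 : p * q' + p ≤ p * q := by
      have : p * (q' + 1) ≤ p * q := Nat.mul_le_mul_left p (by omega)
      nlinarith
    obtain ⟨k, hk⟩ := hdvd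
    rcases k with _ | _ | k'
    · omega
    · omega
    · have : p * q * (k' + 1 + 1) = p * q * k' + p * q + p * q := by ring
      omega
  -- the three Dedekind sums
  have hD1 : dsum (p' : ℤ) (p : ℤ) 0 0 = dsum (q : ℤ) (p : ℤ) 0 0 :=
    dsum_inv q p' p hp0 (by rwa [mul_comm] at hp')
  have hD2 : dsum (q' : ℤ) (q : ℤ) 0 0 = dsum (p : ℤ) (q : ℤ) 0 0 :=
    dsum_inv p q' q hq0 hq'
  have hrec := reciprocity q p hq0 hp0 hcop.symm
  have hD3 : dsum ((p : ℤ) * (q : ℤ) - 2) ((p : ℤ) * (q : ℤ) - 1) 0 0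
      = -(((p:ℝ)*(q:ℝ)-2)*((p:ℝ)*(q:ℝ)-3))/(12*((p:ℝ)*(q:ℝ)-1)) := by
    have e1 : (p : ℤ) * (q : ℤ) - 2 = ((p*q - 1 - 1 : ℕ) : ℤ) := by push_cast; omega
    have e2 : (p : ℤ) * (q : ℤ) - 1 = ((p*q - 1 : ℕ) : ℤ) := by push_cast; omega
    rw [e1, e2, dsum_pred (p*q - 1) (by omega)]
    have c1 : ((p*q - 1 : ℕ) : ℝ) = (p:ℝ)*(q:ℝ) - 1 := by
      push_cast [Nat.cast_sub (show 1 ≤ p*q by omega)]; ring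
    rw [c1]
    ring
  -- real-number setup
  have hP : (2:ℝ) ≤ (p:ℝ) := by exact_mod_cast hp
  have hQ : (3:ℝ) ≤ (q:ℝ) := by exact_mod_cast hq
  have hP0 : (p:ℝ) ≠ 0 := by positivity
  have hQ0 : (q:ℝ) ≠ 0 := by positivity
  have hN6 : (6:ℝ) ≤ (p:ℝ)*(q:ℝ) := by nlinarith
  have hN1 : (p:ℝ)*(q:ℝ) - 1 ≠ 0 := by nlinarith
  have hkeyR : (p':ℝ)*(q:ℝ) + (p:ℝ)*(q':ℝ) = (p:ℝ)*(q:ℝ) + 1 := by exact_mod_cast hkey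
  have hδR : (δ:ℝ) = ((p:ℝ)-1)*((q:ℝ)-1)/2 := by
    have : (2:ℝ) * (δ:ℝ) = ((p:ℝ)-1)*((q:ℝ)-1) := by
      have := congrArg (Nat.cast : ℕ → ℝ) hδ
      push_cast [Nat.cast_sub (show 1 ≤ p by omega), Nat.cast_sub (show 1 ≤ q by omega)] at this
      linarith
    linarith
  have he' : e = -1/(((p:ℝ)*(q:ℝ))*((p:ℝ)*(q:ℝ)-1)) := by
    rw [he]
    have hpq' : (p':ℝ)/(p:ℝ) + (q':ℝ)/(q:ℝ) = ((p:ℝ)*(q:ℝ)+1)/((p:ℝ)*(q:ℝ)) := by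
      field_simp
      linear_combination hkeyR
    have harr : -2 + (p':ℝ)/(p:ℝ) + (q':ℝ)/(q:ℝ) + ((p:ℝ)*(q:ℝ)-2)/((p:ℝ)*(q:ℝ)-1)
        = -2 + ((p':ℝ)/(p:ℝ) + (q':ℝ)/(q:ℝ)) + ((p:ℝ)*(q:ℝ)-2)/((p:ℝ)*(q:ℝ)-1) := by ring
    rw [harr, hpq']
    field_simp
    ring
  -- final computation
  rw [hδR, hD1, hD2, hD3, hε, he']
  rw [show dsum (q : ℤ) (p : ℤ) 0 0 + dsum (p : ℤ) (q : ℤ) 0 0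
      = -1/4 + ((q:ℝ)/p + (p:ℝ)/q + 1/((q:ℝ)*p))/12 from hrec]
  field_simp
  ring
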